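/- For all natural numbers i, n, k with 0 ≤ i ≤ n < k, the rational number (−1)^{n−i} · C(k, i) · C(k−1−i, n−i) equals the Lagrange interpolation coefficient ∏_{j=0, j≠i}^{n} (k−j)/(i−j), where C(·,·) denotes the binomial coefficient and the product is taken in ℚ. -/

import Mathlib

lemma choose_eq_prod_aux (i k : ℕ) (hik : i ≤ k) :
    (Nat.choose k i : ℚ) = ∏ j ∈ Finset.range i, ((k:ℚ) - (j:ℚ)) / ((i:ℚ) - (j:ℚ)) := by
  rw [Finset.prod_div_distrib]
  have h1 : ∏ j ∈ Finset.range i, ((k:ℚ) - (j:ℚ)) = (Nat.descFactorial k i : ℚ) := by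
    rw [Nat.descFactorial_eq_prod_range, Nat.cast_prod]
    refine Finset.prod_congr rfl fun j hj => ?_
    rw [Nat.cast_sub (le_trans (le_of_lt (Finset.mem_range.mp hj)) hik)]
  have h2 : ∏ j ∈ Finset.range i, ((i:ℚ) - (j:ℚ)) = (Nat.factorial i : ℚ) := by
    rw [← Nat.descFactorial_self, Nat.descFactorial_eq_prod_range, Nat.cast_prod]
    refine Finset.prod_congr rfl fun j hj => ?_
    rw [Nat.cast_sub (le_of_lt (Finset.mem_range.mp hj))]
  rw [h1, h2, Nat.descFactorial_eq_factorial_mul_choose, Nat.cast_mul]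
  rw [mul_comm, mul_div_assoc, div_self (by exact_mod_cast Nat.factorial_ne_zero i), mul_one]


/-- for `0 ≤ i ≤ n < k`, the rational number
`(-1)^(n-i) * C(k,i) * C(k-1-i, n-i)` equals the Lagrange interpolation
coefficient `∏_{0 ≤ j ≤ n, j ≠ i} (k - j)/(i - j)`. -/
theorem binomial_eq_lagrange_coefficient (i n k : ℕ) (hin : i ≤ n) (hnk : n < k) :
    (-1 : ℚ) ^ (n - i) * (Nat.choose k i) * (Nat.choose (k - 1 - i) (n - i)) =
      ∏ j ∈ (Finset.range (n + 1)).erase i,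
        ((k : ℚ) - (j : ℚ)) / ((i : ℚ) - (j : ℚ)) := by
  induction n, hin using Nat.le_induction with
  | base =>
    rw [Finset.range_add_one, Finset.erase_insert (Finset.notMem_range_self)]
    simp [choose_eq_prod_aux i k (le_of_lt hnk)]
  | succ n hin ih =>
    have hnk' : n < k := lt_trans (Nat.lt_succ_self n) hnk
    have hne : i ≠ n + 1 := Nat.ne_of_lt (Nat.lt_succ_of_le hin)
    rw [Finset.range_add_one, Finset.erase_insert_of_ne hne.symm,
      Finset.prod_insert (fun h => Finset.notMem_range_self (Finset.mem_of_mem_erase h)),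
      ← ih hnk']
    -- Now pure algebra with the choose recurrence
    have hmain : Nat.choose (k - 1 - i) (n - i + 1) * (n - i + 1)
        = Nat.choose (k - 1 - i) (n - i) * (k - 1 - n) := by
      rw [Nat.choose_succ_right_eq]
      congr 1
      omega
    have hsub : n + 1 - i = (n - i) + 1 := by omega
    have hcast1 : (k : ℚ) - ((n + 1 : ℕ) : ℚ) = ((k - 1 - n : ℕ) : ℚ) := by
      push_cast [Nat.cast_sub (by omega : n ≤ k - 1), Nat.cast_sub (by omega : 1 ≤ k)]
      ring
    have hcast2 : (i : ℚ) - ((n + 1 : ℕ) : ℚ) = -(((n - i : ℕ) : ℚ) + 1) := by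
      push_cast [Nat.cast_sub hin]
      ring
    have hQ : (Nat.choose (k - 1 - i) (n - i + 1) : ℚ) * (((n - i : ℕ) : ℚ) + 1)
        = (Nat.choose (k - 1 - i) (n - i) : ℚ) * ((k - 1 - n : ℕ) : ℚ) := by
      exact_mod_cast congrArg (Nat.cast : ℕ → ℚ) hmain
    have hpos : ((n - i : ℕ) : ℚ) + 1 ≠ 0 := by positivity
    rw [hsub, pow_succ, hcast1, hcast2, div_mul_eq_mul_div,
      eq_div_iff (neg_ne_zero.mpr hpos)]
    linear_combination ((-1 : ℚ)) ^ (n - i) * (Nat.choose k i : ℚ) * hQ
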